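/- Let G be a finite simple undirected graph, let s and t be two distinct vertices of G, let p ≥ 1 be an integer, and let F be a set of edges of G. Then G admits a (p,s,t)-routing in which every shared edge belongs to F if and only if every s-t cut C of G with C ∩ F = ∅ satisfies |C| ≥ p. -/

import Mathlib

/-- The set of edges shared by at least two paths of the routing `P`. -/
def mseSharedEdges {V : Type*} {G : SimpleGraph V} {s t : V} {p : ℕ}
    (P : Fin p → G.Walk s t) : Set (Sym2 V) :=
  {e | ∃ i j : Fin p, i ≠ j ∧ e ∈ (P i).edges ∧ e ∈ (P j).edges}

/-- `C` is an `s`-`t` cut in `G`: a set of edges of `G` whose deletion disconnects `s` from `t`. -/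
def mseIsCut {V : Type*} (G : SimpleGraph V) (s t : V) (C : Set (Sym2 V)) : Prop :=
  C ⊆ G.edgeSet ∧ ¬ (G.deleteEdges C).Reachable s t

attribute [local instance] Classical.propDecidable

namespace MSE
variable {V : Type*} {G : SimpleGraph V}

/-- the list of dart endpoints (ordered pairs) of a walk -/
def dp {a b : V} (W : G.Walk a b) : List (V × V) := W.darts.map fun d => (d.fst, d.snd)

@[simp] lemma dp_nil {a : V} : dp (SimpleGraph.Walk.nil : G.Walk a a) = [] := rfl

@[simp] lemma dp_cons {a c b : V} (h : G.Adj a c) (W : G.Walk c b) :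
    dp (SimpleGraph.Walk.cons h W) = (a, c) :: dp W := rfl

lemma adj_of_mem_dp {a b u v : V} {W : G.Walk a b} (h : (u, v) ∈ dp W) : G.Adj u v := by
  obtain ⟨d, hd, he⟩ := List.mem_map.1 h
  obtain ⟨rfl, rfl⟩ := Prod.mk.injEq .. ▸ he
  exact d.adj

/-- the signed flow of a walk -/
noncomputable def wf {a b : V} (W : G.Walk a b) : V → V → ℤ :=
  fun u v => ((dp W).count (u, v) : ℤ) - ((dp W).count (v, u) : ℤ)

lemma wf_skew {a b : V} (W : G.Walk a b) (u v : V) : wf W u v = - wf W v u := by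
  simp [wf]

lemma count_edges {a b u v : V} (W : G.Walk a b) (huv : u ≠ v) :
    W.edges.count s(u, v) = (dp W).count (u, v) + (dp W).count (v, u) := by
  induction W with
  | nil => simp [dp]
  | cons h W ih =>
    rename_i x y c
    rw [SimpleGraph.Walk.edges_cons, dp_cons, List.count_cons, List.count_cons, List.count_cons,
      ih]
    by_cases h1 : x = u ∧ y = v
    · obtain ⟨rfl, rfl⟩ := h1
      simp [Prod.mk.injEq, Sym2.eq_iff, huv, Ne.symm huv]
      omega
    · by_cases h2 : x = v ∧ y = u
      · obtain ⟨rfl, rfl⟩ := h2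
        simp [Prod.mk.injEq, Sym2.eq_iff, huv, Ne.symm huv]
        omega
      · have hs : ¬ (s(x, y) = s(u, v)) := by
          rw [Sym2.eq_iff]; tauto
        have hp1 : ¬ ((x, y) = (u, v)) := by rw [Prod.mk.injEq]; tauto
        have hp2 : ¬ ((x, y) = (v, u)) := by rw [Prod.mk.injEq]; tauto
        simp [hs, hp1, hp2]

lemma count_dp_le_one {a b u v : V} {W : G.Walk a b} (hT : W.IsTrail) (huv : u ≠ v) :
    (dp W).count (u, v) + (dp W).count (v, u) ≤ 1 := by
  rw [← count_edges W huv]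
  exact List.nodup_iff_count_le_one.1 hT.edges_nodup _

lemma count_dp_self {a b u : V} (W : G.Walk a b) : (dp W).count (u, u) = 0 := by
  rw [List.count_eq_zero]
  intro h
  exact G.irrefl (adj_of_mem_dp h)

lemma sum_wf [Fintype V] {a b : V} (W : G.Walk a b) (v : V) :
    ∑ u, wf W v u = (if v = a then 1 else 0) - (if v = b then 1 else 0) := by
  induction W with
  | nil => simp [wf]
  | cons h W ih =>
    rename_i x y c
    have : ∀ u, wf (SimpleGraph.Walk.cons h W) v u =
        wf W v u + ((if (v, u) = (x, y) then 1 else 0) - (if (v, u) = (y, x) then 1 else 0)) := by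
      intro u
      have h1 : ((x, y) = (v, u)) = ((v, u) = (x, y)) := by
        rw [eq_iff_iff]; exact eq_comm
      have h2 : ((x, y) = (u, v)) = ((v, u) = (y, x)) := by
        rw [eq_iff_iff, Prod.mk.injEq, Prod.mk.injEq]
        exact ⟨fun ⟨a, b⟩ => ⟨b.symm, a.symm⟩, fun ⟨a, b⟩ => ⟨b.symm, a.symm⟩⟩
      simp only [wf, dp_cons, List.count_cons, beq_iff_eq, h1, h2]
      split_ifs <;> push_cast <;> ring
    rw [Finset.sum_congr rfl fun u _ => this u, Finset.sum_add_distrib, ih,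
      Finset.sum_sub_distrib]
    have s1 : ∑ u, (if (v, u) = (x, y) then (1:ℤ) else 0) = if v = x then 1 else 0 := by
      simp only [Prod.mk.injEq]
      by_cases hvx : v = x <;> simp [hvx]
    have s2 : ∑ u, (if (v, u) = (y, x) then (1:ℤ) else 0) = if v = y then 1 else 0 := by
      simp only [Prod.mk.injEq]
      by_cases hvy : v = y <;> simp [hvy]
    rw [s1, s2]
    ring

/-- crossing sum: the value of a "flow" equals the net flow across any s-t separating set -/
lemma cross [Fintype V] {s t : V} (f : V → V → ℤ) (q : ℤ)
    (skew : ∀ u v, f u v = - f v u)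
    (consv : ∀ v, v ≠ s → v ≠ t → ∑ u, f v u = 0)
    (val : ∑ u, f s u = q)
    (S : Finset V) (hs : s ∈ S) (ht : t ∉ S) :
    q = ∑ v ∈ S, ∑ u ∈ Sᶜ, f v u := by
  have h1 : ∑ v ∈ S, ∑ u, f v u = q := by
    rw [Finset.sum_eq_single_of_mem s hs]
    · exact val
    · intro v hv hvs
      exact consv v hvs (fun h => ht (h ▸ hv))
  have h2 : ∑ v ∈ S, ∑ u ∈ S, f v u = 0 := by
    have h3 : ∑ v ∈ S, ∑ u ∈ S, f v u = - ∑ v ∈ S, ∑ u ∈ S, f v u := by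
      calc ∑ v ∈ S, ∑ u ∈ S, f v u = ∑ v ∈ S, ∑ u ∈ S, -f u v :=
            Finset.sum_congr rfl fun v _ => Finset.sum_congr rfl fun u _ => skew v u
        _ = - ∑ v ∈ S, ∑ u ∈ S, f u v := by
            simp [Finset.sum_neg_distrib]
        _ = - ∑ v ∈ S, ∑ u ∈ S, f v u := by rw [Finset.sum_comm]
    linarith
  calc q = ∑ v ∈ S, ∑ u, f v u := h1.symm
    _ = ∑ v ∈ S, (∑ u ∈ S, f v u + ∑ u ∈ Sᶜ, f v u) :=
        Finset.sum_congr rfl fun v _ => (Finset.sum_add_sum_compl S _).symm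
    _ = (∑ v ∈ S, ∑ u ∈ S, f v u) + ∑ v ∈ S, ∑ u ∈ Sᶜ, f v u := Finset.sum_add_distrib
    _ = ∑ v ∈ S, ∑ u ∈ Sᶜ, f v u := by rw [h2, zero_add]

/-- from reachability along a relation implying adjacency, get a path whose darts satisfy it -/
lemma exists_path_of_rtg {s t : V} (R : V → V → Prop) (hR : ∀ u v, R u v → G.Adj u v)
    (h : Relation.ReflTransGen R s t) :
    ∃ W : G.Walk s t, W.IsPath ∧ ∀ q ∈ dp W, R q.1 q.2 := by
  have : ∃ W : G.Walk s t, ∀ q ∈ dp W, R q.1 q.2 := by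
    induction h using Relation.ReflTransGen.head_induction_on with
    | refl => exact ⟨SimpleGraph.Walk.nil, by simp⟩
    | head hab _ ih =>
      obtain ⟨W, hW⟩ := ih
      refine ⟨SimpleGraph.Walk.cons (hR _ _ hab) W, ?_⟩
      intro q hq
      rw [dp_cons, List.mem_cons] at hq
      rcases hq with rfl | hq
      · exact hab
      · exact hW q hq
  obtain ⟨W, hW⟩ := this
  refine ⟨W.bypass, W.bypass_isPath, fun q hq => hW q ?_⟩
  simp only [dp, List.mem_map] at hq ⊢
  obtain ⟨d, hd, rfl⟩ := hq
  exact ⟨d, SimpleGraph.Walk.darts_bypass_subset W hd, rfl⟩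


lemma arith_step (S F0 : ℤ) (cP cP' : ℕ) (h1 : cP + cP' ≤ 1)
    (h2 : 0 < cP → 0 < F0) (h3 : 0 < cP' → F0 < 0)
    (hIH : S ≤ max (F0 - ((cP : ℤ) - (cP' : ℤ))) 0) : S + cP ≤ max F0 0 := by
  have hc : cP = 0 ∧ cP' = 0 ∨ cP = 1 ∧ cP' = 0 ∨ cP = 0 ∧ cP' = 1 := by omega
  rcases hc with ⟨e, e'⟩ | ⟨e, e'⟩ | ⟨e, e'⟩ <;> subst e <;> subst e'
  · simpa using hIH
  · have hF : 0 < F0 := h2 one_pos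
    rw [max_eq_left (by omega : (0:ℤ) ≤ F0 - ((1:ℕ) - (0:ℕ) : ℤ))] at hIH
    rw [max_eq_left hF.le]
    push_cast at hIH ⊢
    omega
  · have hF : F0 < 0 := h3 one_pos
    rw [max_eq_right (by push_cast; omega : F0 - ((0:ℕ) - (1:ℕ) : ℤ) ≤ 0)] at hIH
    rw [max_eq_right hF.le]
    push_cast
    omega

lemma decomp [Fintype V] {s t : V} (hst : s ≠ t) :
    ∀ (p : ℕ) (f : V → V → ℤ),
      (∀ u v, f u v = - f v u) →
      (∀ u v, f u v ≠ 0 → G.Adj u v) →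
      (∀ v, v ≠ s → v ≠ t → ∑ u, f v u = 0) →
      (∑ u, f s u = (p : ℤ)) →
      ∃ W : Fin p → G.Walk s t,
        ∀ u v : V, (∑ i, ((dp (W i)).count (u, v) : ℤ)) ≤ max (f u v) 0 := by
  intro p
  induction p with
  | zero =>
    intro f skew supp consv val
    exact ⟨Fin.elim0, fun u v => by simp⟩
  | succ p ih =>
    intro f skew supp consv val
    set R : V → V → Prop := fun u v => 0 < f u v with hR
    have hreach : Relation.ReflTransGen R s t := by
      by_contra ht
      set S : Finset V := (setOf (Relation.ReflTransGen R s)).toFinite.toFinset with hS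
      have hsS : s ∈ S := by
        simp only [hS, Set.Finite.mem_toFinset, Set.mem_setOf_eq]
        exact Relation.ReflTransGen.refl
      have htS : t ∉ S := by
        simp only [hS, Set.Finite.mem_toFinset, Set.mem_setOf_eq]; exact ht
      have hclosed : ∀ v ∈ S, ∀ u, 0 < f v u → u ∈ S := by
        intro v hv u hfu
        simp only [hS, Set.Finite.mem_toFinset, Set.mem_setOf_eq] at hv ⊢
        exact hv.tail hfu
      have hcr := cross f ((p : ℤ) + 1) skew consv (by rw [val]; push_cast; ring) S hsS htS
      have hle : ∑ v ∈ S, ∑ u ∈ Sᶜ, f v u ≤ 0 := by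
        refine Finset.sum_nonpos fun v hv => Finset.sum_nonpos fun u hu => ?_
        by_contra hpos
        push_neg at hpos
        exact (Finset.mem_compl.1 hu) (hclosed v hv u hpos)
      omega
    obtain ⟨P, hPpath, hPR⟩ := exists_path_of_rtg R (fun u v h => supp u v h.ne') hreach
    have skew' : ∀ u v, f u v - wf P u v = - (f v u - wf P v u) := by
      intro u v
      rw [skew u v, wf_skew P u v]
      ring
    have supp' : ∀ u v, f u v - wf P u v ≠ 0 → G.Adj u v := by
      intro u v h
      by_contra hadj
      have h1 : f u v = 0 := by_contra fun h' => hadj (supp u v h')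
      have h2 : (dp P).count (u, v) = 0 := List.count_eq_zero.2 fun hm => hadj (adj_of_mem_dp hm)
      have h3 : (dp P).count (v, u) = 0 :=
        List.count_eq_zero.2 fun hm => hadj ((adj_of_mem_dp hm).symm)
      simp [wf, h1, h2, h3] at h
    have consv' : ∀ v, v ≠ s → v ≠ t → ∑ u, (f v u - wf P v u) = 0 := by
      intro v hvs hvt
      rw [Finset.sum_sub_distrib, consv v hvs hvt, sum_wf P v, if_neg hvs, if_neg hvt]
      ring
    have val' : ∑ u, (f s u - wf P s u) = (p : ℤ) := by
      rw [Finset.sum_sub_distrib, val, sum_wf P s, if_pos rfl, if_neg hst]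
      push_cast
      ring
    obtain ⟨W', hW'⟩ := ih (fun u v => f u v - wf P u v) skew' supp' consv' val'
    refine ⟨Fin.snoc W' P, fun u v => ?_⟩
    rw [Fin.sum_univ_castSucc]
    simp only [Fin.snoc_castSucc, Fin.snoc_last]
    by_cases huv : u = v
    · subst huv
      simp only [count_dp_self, Nat.cast_zero, add_zero, Finset.sum_const_zero]
      exact le_max_right _ _
    · refine arith_step _ _ _ _ (count_dp_le_one hPpath.isTrail huv) ?_ ?_ ?_
      · intro hc
        exact hPR (u, v) (List.count_pos_iff.1 hc)
      · intro hc
        have := hPR (v, u) (List.count_pos_iff.1 hc)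
        simp only [hR] at this
        rw [skew v u] at this
        omega
      · exact hW' u v


lemma exists_flow [Fintype V] {s t : V} (hst : s ≠ t) {F : Set (Sym2 V)} :
    ∀ p : ℕ, (∀ C : Set (Sym2 V), mseIsCut G s t C → C ∩ F = ∅ → p ≤ C.ncard) →
    ∃ f : V → V → ℤ,
      (∀ u v, f u v = - f v u) ∧
      (∀ u v, f u v ≠ 0 → G.Adj u v) ∧
      (∀ u v, s(u, v) ∉ F → f u v ≤ 1) ∧
      (∀ v, v ≠ s → v ≠ t → ∑ u, f v u = 0) ∧
      (∑ u, f s u = (p : ℤ)) := by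
  intro p
  induction p with
  | zero =>
    intro _
    exact ⟨fun _ _ => 0, by simp, by simp, by simp, by simp, by simp⟩
  | succ p ih =>
    intro hcut
    obtain ⟨f, skew, supp, cap, consv, val⟩ :=
      ih (fun C hC hCF => le_trans (Nat.le_succ p) (hcut C hC hCF))
    set R : V → V → Prop := fun u v => G.Adj u v ∧ (s(u, v) ∈ F ∨ f u v ≤ 0) with hR
    have hreach : Relation.ReflTransGen R s t := by
      by_contra hre
      set S : Finset V := (setOf (Relation.ReflTransGen R s)).toFinite.toFinset with hS
      have hsS : s ∈ S := by
        simp only [hS, Set.Finite.mem_toFinset, Set.mem_setOf_eq]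
        exact Relation.ReflTransGen.refl
      have htS : t ∉ S := by
        simp only [hS, Set.Finite.mem_toFinset, Set.mem_setOf_eq]; exact hre
      have hclosed : ∀ v ∈ S, ∀ u, R v u → u ∈ S := by
        intro v hv u hvu
        simp only [hS, Set.Finite.mem_toFinset, Set.mem_setOf_eq] at hv ⊢
        exact hv.tail hvu
      set C : Set (Sym2 V) :=
        {e | e ∈ G.edgeSet ∧ ∃ q : V × V, q.1 ∈ S ∧ q.2 ∉ S ∧ e = s(q.1, q.2)} with hC
      have hCcut : mseIsCut G s t C := by
        refine ⟨fun e he => he.1, ?_⟩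
        intro hreach2
        obtain ⟨w⟩ := hreach2
        have hstay : ∀ x y : V, (G.deleteEdges C).Walk x y → x ∈ S → y ∈ S := by
          intro x y w
          induction w with
          | nil => exact id
          | @cons a b c hab w ihw =>
            intro ha
            rw [SimpleGraph.deleteEdges_adj] at hab
            refine ihw ?_
            by_contra hb
            exact hab.2 ⟨G.mem_edgeSet.2 hab.1, (a, b), ha, hb, rfl⟩
        exact htS (hstay s t w hsS)
      have hCF : C ∩ F = ∅ := by
        rw [Set.eq_empty_iff_forall_notMem]
        rintro e ⟨⟨heE, ⟨q, hq1, hq2, rfl⟩⟩, heF⟩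
        exact hq2 (hclosed q.1 hq1 q.2 ⟨G.mem_edgeSet.1 heE, Or.inl heF⟩)
      have hp1 : p + 1 ≤ C.ncard := hcut C hCcut hCF
      set B : Finset (V × V) := (S ×ˢ Sᶜ).filter (fun q => G.Adj q.1 q.2) with hB
      have hCeq : C = ↑(B.image fun q => s(q.1, q.2)) := by
        ext e
        simp only [hC, Set.mem_setOf_eq, Finset.coe_image, Set.mem_image, Finset.mem_coe, hB,
          Finset.mem_filter, Finset.mem_product, Finset.mem_compl]
        constructor
        · rintro ⟨heE, q, h1, h2, rfl⟩
          exact ⟨q, ⟨⟨h1, h2⟩, G.mem_edgeSet.1 heE⟩, rfl⟩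
        · rintro ⟨q, ⟨⟨h1, h2⟩, hadj⟩, rfl⟩
          exact ⟨G.mem_edgeSet.2 hadj, q, h1, h2, rfl⟩
      have hcard : ((p : ℤ)) = (B.card : ℤ) := by
        have hcr := cross f (p : ℤ) skew consv val S hsS htS
        have h1 : ∑ v ∈ S, ∑ u ∈ Sᶜ, f v u = ∑ q ∈ S ×ˢ Sᶜ, f q.1 q.2 :=
          (Finset.sum_product' ..).symm
        have h2 : ∑ q ∈ B, f q.1 q.2 = ∑ q ∈ S ×ˢ Sᶜ, f q.1 q.2 := by
          refine Finset.sum_subset (Finset.filter_subset _ _) ?_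
          intro q hq hqB
          by_contra h0
          exact hqB (Finset.mem_filter.2 ⟨hq, supp q.1 q.2 h0⟩)
        have h3 : ∑ q ∈ B, f q.1 q.2 = ∑ _q ∈ B, (1 : ℤ) := by
          refine Finset.sum_congr rfl fun q hq => ?_
          rw [hB, Finset.mem_filter, Finset.mem_product, Finset.mem_compl] at hq
          obtain ⟨⟨hq1, hq2⟩, hadj⟩ := hq
          have hnR : ¬ R q.1 q.2 := fun h => hq2 (hclosed q.1 hq1 q.2 h)
          have hX : ¬ (s(q.1, q.2) ∈ F ∨ f q.1 q.2 ≤ 0) := fun hx => hnR ⟨hadj, hx⟩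
          push_neg at hX
          have := cap q.1 q.2 hX.1
          omega
        rw [hcr, h1, ← h2, h3, Finset.sum_const]
        simp
      have hle : C.ncard ≤ p := by
        rw [hCeq, Set.ncard_coe_finset]
        have := Finset.card_image_le (s := B) (f := fun q => s(q.1, q.2))
        omega
      omega
    obtain ⟨A, hApath, hAR⟩ := exists_path_of_rtg R (fun u v h => h.1) hreach
    refine ⟨fun u v => f u v + wf A u v, ?_, ?_, ?_, ?_, ?_⟩
    · intro u v
      show f u v + wf A u v = -(f v u + wf A v u)
      rw [skew, wf_skew]
      ring
    · intro u v h
      by_contra hadj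
      have h1 : f u v = 0 := by_contra fun h' => hadj (supp u v h')
      have h2 : (dp A).count (u, v) = 0 := List.count_eq_zero.2 fun hm => hadj (adj_of_mem_dp hm)
      have h3 : (dp A).count (v, u) = 0 :=
        List.count_eq_zero.2 fun hm => hadj ((adj_of_mem_dp hm).symm)
      simp [wf, h1, h2, h3] at h
    · intro u v huvF
      by_cases huv : u = v
      · subst huv
        have h0 : f u u = 0 := by have := skew u u; omega
        simp [wf, h0]
      · have hcnt := count_dp_le_one hApath.isTrail huv
        have hwf : wf A u v = ((dp A).count (u, v) : ℤ) - ((dp A).count (v, u) : ℤ) := rfl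
        have hc1 : 0 < (dp A).count (u, v) → f u v ≤ 0 := by
          intro h
          rcases (hAR (u, v) (List.count_pos_iff.1 h)).2 with hF' | hf'
          · exact absurd hF' huvF
          · exact hf'
        have hcap := cap u v huvF
        show f u v + wf A u v ≤ 1
        rcases Nat.eq_zero_or_pos ((dp A).count (u, v)) with h0 | hpos
        · rw [hwf, h0]
          push_cast
          omega
        · have hf0 := hc1 hpos
          rw [hwf]
          omega
    · intro v hvs hvt
      show ∑ u, (f v u + wf A v u) = 0
      rw [Finset.sum_add_distrib, consv v hvs hvt, sum_wf A v, if_neg hvs, if_neg hvt]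
      ring
    · show ∑ u, (f s u + wf A s u) = ((p : ℤ) + 1)
      rw [Finset.sum_add_distrib, val, sum_wf A s, if_pos rfl, if_neg hst]
      push_cast
      ring

end MSE

theorem stmt_2 {V : Type*} [Fintype V] (G : SimpleGraph V) (s t : V) (hst : s ≠ t)
    (p : ℕ) (hp : 1 ≤ p) (F : Set (Sym2 V)) (hF : F ⊆ G.edgeSet) :
    (∃ P : Fin p → G.Walk s t, (∀ i, (P i).IsPath) ∧ mseSharedEdges P ⊆ F) ↔
    (∀ C : Set (Sym2 V), mseIsCut G s t C → C ∩ F = ∅ → p ≤ C.ncard) := by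
  constructor
  · rintro ⟨P, hPpath, hsh⟩ C ⟨hCE, hCre⟩ hCF
    have hex : ∀ i : Fin p, ∃ e, e ∈ C ∧ e ∈ (P i).edges := by
      intro i
      by_contra h
      push_neg at h
      exact hCre ⟨(P i).toDeleteEdges C (fun e he heC => h e heC he)⟩
    choose e he1 he2 using hex
    have hinj : Function.Injective e := by
      intro i j hij
      by_contra hne
      have hshared : e i ∈ mseSharedEdges P := ⟨i, j, hne, he2 i, by rw [hij]; exact he2 j⟩
      exact Set.eq_empty_iff_forall_notMem.1 hCF (e i) ⟨he1 i, hsh hshared⟩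
    have hcard : Nat.card (Fin p) ≤ Nat.card C := by
      have hinj' : Function.Injective (fun i : Fin p => (⟨e i, he1 i⟩ : C)) :=
        fun i j h => hinj (Subtype.ext_iff.1 h)
      exact Nat.card_le_card_of_injective _ hinj'
    rwa [Nat.card_eq_fintype_card, Fintype.card_fin, Nat.card_coe_set_eq] at hcard
  · intro hcut
    obtain ⟨f, skew, supp, cap, consv, val⟩ := MSE.exists_flow hst p hcut
    obtain ⟨W, hW⟩ := MSE.decomp hst p f skew supp consv val
    refine ⟨fun i => ((W i).toPath : G.Walk s t), fun i => (W i).toPath.2, ?_⟩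
    intro e he
    induction e using Sym2.ind with
    | _ u v =>
      obtain ⟨i, j, hij, hei, hej⟩ := he
      by_contra heF
      have hei' : s(u, v) ∈ (W i).edges := SimpleGraph.Walk.edges_toPath_subset _ hei
      have hej' : s(u, v) ∈ (W j).edges := SimpleGraph.Walk.edges_toPath_subset _ hej
      have hadj : G.Adj u v := (W i).adj_of_mem_edges hei'
      have huv : u ≠ v := hadj.ne
      have hci : 1 ≤ (MSE.dp (W i)).count (u, v) + (MSE.dp (W i)).count (v, u) := by
        rw [← MSE.count_edges (W i) huv]
        exact List.count_pos_iff.2 hei'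
      have hcj : 1 ≤ (MSE.dp (W j)).count (u, v) + (MSE.dp (W j)).count (v, u) := by
        rw [← MSE.count_edges (W j) huv]
        exact List.count_pos_iff.2 hej'
      have hsum : ∀ u' v' : V,
          ((MSE.dp (W i)).count (u', v') : ℤ) + ((MSE.dp (W j)).count (u', v') : ℤ) ≤
            max (f u' v') 0 := by
        intro u' v'
        calc ((MSE.dp (W i)).count (u', v') : ℤ) + ((MSE.dp (W j)).count (u', v') : ℤ)
            = ∑ k ∈ ({i, j} : Finset (Fin p)), ((MSE.dp (W k)).count (u', v') : ℤ) :=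
              (Finset.sum_pair (f := fun k => ((MSE.dp (W k)).count (u', v') : ℤ)) hij).symm
          _ ≤ ∑ k, ((MSE.dp (W k)).count (u', v') : ℤ) :=
              Finset.sum_le_sum_of_subset_of_nonneg (Finset.subset_univ _)
                (fun k _ _ => by positivity)
          _ ≤ max (f u' v') 0 := hW u' v'
      have hA := hsum u v
      have hB := hsum v u
      have hM1 : max (f u v) 0 ≤ 1 := max_le (cap u v heF) one_pos.le
      have heF' : s(v, u) ∉ F := by rwa [Sym2.eq_swap]
      have hM2 : max (f v u) 0 ≤ 1 := max_le (cap v u heF') one_pos.le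
      have hM3 : max (f u v) 0 = 0 ∨ max (f v u) 0 = 0 := by
        rcases le_total (f u v) 0 with h | h
        · exact Or.inl (max_eq_right h)
        · refine Or.inr (max_eq_right ?_)
          rw [skew v u]
          omega
      have hA1 := hA.trans hM1
      have hB1 := hB.trans hM2
      rcases hM3 with h | h
      · rw [h] at hA
        omega
      · rw [h] at hB
        omega
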